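/- For n > 2, let S_n be the algebra on the set {1, ..., n} whose operations are all unary operations together with all non-surjective finitary operations (the Słupecki clone). For m < n, the subuniverses of S_n^m are exactly the relations R_θ = {(a₁,...,a_m) : a_i = a_j whenever (i,j) ∈ θ} for equivalence relations θ on {1,...,m}. In particular, every such relation is preserved by every operation on {1,...,n}. -/

import Mathlib

/-- Combining two tuples of `R` into one whose kernel is the intersection of the kernels,
using closure under non-surjective operations. -/
lemma slupecki_combine {n m : ℕ} (hm1 : 0 < m) (hmn : m < n) {R : Set (Fin m → Fin n)}
    (hop : ∀ (l : ℕ) (f : (Fin l → Fin n) → Fin n), ¬ Function.Surjective f →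
        ∀ ts : Fin l → (Fin m → Fin n), (∀ j, ts j ∈ R) →
          (fun i => f (fun j => ts j i)) ∈ R)
    {a b : Fin m → Fin n} (ha : a ∈ R) (hb : b ∈ R) :
    ∃ c ∈ R, ∀ i j, c i = c j → a i = a j ∧ b i = b j := by
  classical
  set g : Fin m → Fin n × Fin n := fun i => (a i, b i) with hg
  let e : Fin n × Fin n → Fin n := fun v =>
    if h : ∃ i, g i = v then Fin.castLE hmn.le h.choose else Fin.castLE hmn.le ⟨0, hm1⟩
  have hval : ∀ v, (e v).val < m := by
    intro v
    by_cases h : ∃ i, g i = v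
    · simp only [e, dif_pos h, Fin.coe_castLE]
      exact h.choose.isLt
    · simp only [e, dif_neg h, Fin.coe_castLE]
      exact hm1
  have hns : ¬ Function.Surjective (fun v : Fin 2 → Fin n => e (v 0, v 1)) := by
    intro hsurj
    obtain ⟨v, hv⟩ := hsurj ⟨m, hmn⟩
    have hv' : e (v 0, v 1) = ⟨m, hmn⟩ := hv
    have := hval (v 0, v 1)
    rw [hv'] at this
    exact lt_irrefl m this
  have hmem := hop 2 _ hns ![a, b] (by
    intro j
    fin_cases j
    · simpa using ha
    · simpa using hb)
  refine ⟨_, hmem, ?_⟩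
  intro i j hij
  have hij' : e (g i) = e (g j) := by
    simpa [Matrix.cons_val_zero, Matrix.cons_val_one, Matrix.head_cons] using hij
  have hi : ∃ k, g k = g i := ⟨i, rfl⟩
  have hj : ∃ k, g k = g j := ⟨j, rfl⟩
  rw [show e (g i) = Fin.castLE hmn.le hi.choose from dif_pos hi,
      show e (g j) = Fin.castLE hmn.le hj.choose from dif_pos hj] at hij'
  have hch : hi.choose = hj.choose := Fin.castLE_injective hmn.le hij'
  have hgg : g i = g j := by
    rw [← hi.choose_spec, ← hj.choose_spec, hch]
  exact ⟨congrArg Prod.fst hgg, congrArg Prod.snd hgg⟩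

/-- For `n > 2` and `m < n`, the nonempty subuniverses of the `m`-th power of the
Słupecki algebra on `Fin n` (closed under all unary and all non-surjective operations)
are exactly the relations `R_θ` determined by equivalence relations `θ` on `Fin m`;
moreover every such relation is preserved by every operation on `Fin n`. -/
theorem stmt_12 (n m : ℕ) (hn : 2 < n) (hm : m < n)
    (R : Set (Fin m → Fin n)) (hne : R.Nonempty) :
    (((∀ u : Fin n → Fin n, ∀ t ∈ R, (fun i => u (t i)) ∈ R) ∧
      (∀ (l : ℕ) (f : (Fin l → Fin n) → Fin n), ¬ Function.Surjective f →
        ∀ ts : Fin l → (Fin m → Fin n), (∀ j, ts j ∈ R) →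
          (fun i => f (fun j => ts j i)) ∈ R)) ↔
      (∃ θ : Setoid (Fin m), R = {t | ∀ i j : Fin m, θ.r i j → t i = t j})) ∧
    (∀ (θ : Setoid (Fin m)) (l : ℕ) (f : (Fin l → Fin n) → Fin n)
        (ts : Fin l → (Fin m → Fin n)),
      (∀ j, ts j ∈ {t : Fin m → Fin n | ∀ i i' : Fin m, θ.r i i' → t i = t i'}) →
      (fun i => f (fun j => ts j i)) ∈
        {t : Fin m → Fin n | ∀ i i' : Fin m, θ.r i i' → t i = t i'}) := by
  classical
  refine ⟨⟨?_, ?_⟩, ?_⟩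
  · -- forward direction
    rintro ⟨hun, hop⟩
    rcases Nat.eq_zero_or_pos m with hm0 | hm1
    · subst hm0
      refine ⟨⊤, ?_⟩
      have hsub : ∀ s t : Fin 0 → Fin n, s = t := fun s t => funext fun i => i.elim0
      obtain ⟨t0, ht0⟩ := hne
      ext t
      constructor
      · intro _ i j _; exact i.elim0
      · intro _; rw [hsub t t0]; exact ht0
    · refine ⟨⟨fun i j => ∀ t ∈ R, t i = t j,
        ⟨fun i t ht => rfl, fun h t ht => (h t ht).symm,
         fun h1 h2 t ht => (h1 t ht).trans (h2 t ht)⟩⟩, ?_⟩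
      -- separation: there is s ∈ R separating all non-related pairs
      have sep : ∀ Q : Finset (Fin m × Fin m), ∃ s ∈ R,
          ∀ p ∈ Q, (∃ w ∈ R, w p.1 ≠ w p.2) → s p.1 ≠ s p.2 := by
        intro Q
        induction Q using Finset.induction_on with
        | empty =>
          obtain ⟨s, hs⟩ := hne
          exact ⟨s, hs, by simp⟩
        | insert _ _ hp ih =>
          rename_i p Q'
          obtain ⟨s, hs, hsep⟩ := ih
          by_cases hw : ∃ w ∈ R, w p.1 ≠ w p.2
          · obtain ⟨w, hwR, hwne⟩ := hw
            obtain ⟨c, hcR, hc⟩ := slupecki_combine hm1 hm hop hs hwR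
            refine ⟨c, hcR, ?_⟩
            intro q hq hqw
            rcases Finset.mem_insert.mp hq with rfl | hq'
            · exact fun h => hwne (hc _ _ h).2
            · exact fun h => hsep q hq' hqw (hc _ _ h).1
          · refine ⟨s, hs, ?_⟩
            intro q hq hqw
            rcases Finset.mem_insert.mp hq with rfl | hq'
            · exact absurd hqw hw
            · exact hsep q hq' hqw
      obtain ⟨s, hsR, hsep⟩ := sep Finset.univ
      ext t
      constructor
      · intro ht i j hij
        exact hij t ht
      · intro ht
        have hker : ∀ i j, s i = s j → ∀ r ∈ R, r i = r j := by
          intro i j hsij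
          by_contra hc
          push_neg at hc
          exact hsep (i, j) (Finset.mem_univ _) hc hsij
        let u : Fin n → Fin n := fun x => if h : ∃ i, s i = x then t h.choose else x
        have hu : (fun i => u (s i)) = t := by
          funext i
          have h : ∃ k, s k = s i := ⟨i, rfl⟩
          simp only [u, dif_pos h]
          exact ht h.choose i (hker _ _ h.choose_spec)
        have := hun u s hsR
        rwa [hu] at this
  · -- backward direction
    rintro ⟨θ, rfl⟩
    constructor
    · intro u t ht i j hij
      exact congrArg u (ht i j hij)
    · intro l f _ ts hts i j hij
      exact congrArg f (funext fun k => hts k i j hij)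
  · -- preservation
    intro θ l f ts hts i i' h
    exact congrArg f (funext fun j => hts j i i' h)
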